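/- For n >= 2 and a pair r of opposite vertices of the punctured 2n-gon, the class Psi(cw(r)) of centrally symmetric triangulations of the punctured 2n-gon containing the clockwise central chord pair at r is isomorphic (as a graph under flips) to the type-A associahedron graph a_{n-1}, whose vertices are triangulations of an (n+2)-gon. -/

import Mathlib

open scoped BigOperators

/-- `x` lies strictly inside the (clockwise) arc from `a` to `b` of the regular `m`-gon,
whose vertices are labeled by `ZMod m`. -/
def arcMem (m : ℕ) (a b x : ZMod m) : Prop :=
  0 < (x - a).val ∧ (x - a).val < (b - a).val

/-- Ordered version of the crossing predicate for the chords `{a,b}` and `{c,d}`: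
exactly one of `c, d` lies strictly inside the open arc from `a` to `b`. -/
def crossPairs (m : ℕ) (a b c d : ZMod m) : Prop :=
  (arcMem m a b c ∧ arcMem m b a d) ∨ (arcMem m a b d ∧ arcMem m b a c)

/-- Two chords of the convex `m`-gon cross (in their interiors). -/
def Crosses (m : ℕ) (e f : Sym2 (ZMod m)) : Prop :=
  ∃ a b c d : ZMod m, e = s(a, b) ∧ f = s(c, d) ∧ crossPairs m a b c d

/-- `e` is a diagonal of the convex `m`-gon: its endpoints are distinct and non-adjacent. -/
def IsDiagonal (m : ℕ) (e : Sym2 (ZMod m)) : Prop :=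
  ∃ a b : ZMod m, e = s(a, b) ∧ a ≠ b ∧ b ≠ a + 1 ∧ a ≠ b + 1

/-- A triangulation of the convex `m`-gon: a maximal set of pairwise non-crossing diagonals. -/
def IsTriangulation (m : ℕ) (T : Finset (Sym2 (ZMod m))) : Prop :=
  (∀ e ∈ T, IsDiagonal m e) ∧
  (∀ e ∈ T, ∀ f ∈ T, ¬ Crosses m e f) ∧
  (∀ e, IsDiagonal m e → e ∉ T → ∃ f ∈ T, Crosses m e f)

/-- A diagonal of the regular `(2n+2)`-gon is central if it joins two opposite vertices,
i.e. passes through the center of the polygon. -/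
def IsCentral (n : ℕ) (e : Sym2 (ZMod (2 * n + 2))) : Prop :=
  ∃ a : ZMod (2 * n + 2), e = s(a, a + (n : ZMod (2 * n + 2)) + 1)

/-- The central diagonal of the regular `(2n+2)`-gon with endpoint `a`. -/
def centralDiag (n : ℕ) (a : ZMod (2 * n + 2)) : Sym2 (ZMod (2 * n + 2)) :=
  s(a, a + (n : ZMod (2 * n + 2)) + 1)

/-- A centrally-symmetric triangulation of the regular `(2n+2)`-gon: a triangulation invariant
under 180-degree rotation, i.e. under adding `n+1` to every vertex label. -/
def CSTriangulation (n : ℕ) (T : Finset (Sym2 (ZMod (2 * n + 2)))) : Prop :=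
  IsTriangulation (2 * n + 2) T ∧
  ∀ e ∈ T, Sym2.map (· + ((n : ZMod (2 * n + 2)) + 1)) e ∈ T

/-- The 1-skeleton of the type-A associahedron on the triangulations of the convex `m`-gon:
two triangulations are adjacent iff they differ in a single diagonal flip. -/
def assocGraphA (m : ℕ) :
    SimpleGraph {T : Finset (Sym2 (ZMod m)) // IsTriangulation m T} where
  Adj T T' := T ≠ T' ∧ (T.val \ T'.val).card ≤ 1 ∧ (T'.val \ T.val).card ≤ 1
  symm := ⟨fun _ _ h => ⟨Ne.symm h.1, h.2.2, h.2.1⟩⟩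
  loopless := ⟨fun _ h => h.1 rfl⟩

/-- Chords of the punctured `2n`-gon: non-central diagonals of the `2n`-gon, or central chords
tangent to the central disc, recorded by their polygon vertex together with their orientation
(`true` = emanating clockwise, `false` = counterclockwise). -/
inductive DChord (n : ℕ) where
  | diag : Sym2 (ZMod (2 * n)) → DChord n
  | central : ZMod (2 * n) → Bool → DChord n
deriving DecidableEq

/-- Validity of a chord of the punctured `2n`-gon: a diagonal must have distinct, non-adjacent,
non-opposite endpoints (the segments joining opposite vertices would meet the disc). -/
def DChord.IsValid (n : ℕ) : DChord n → Prop
  | .diag e => ∃ a b : ZMod (2 * n),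
      e = s(a, b) ∧ a ≠ b ∧ b ≠ a + 1 ∧ a ≠ b + 1 ∧ b ≠ a + (n : ZMod (2 * n))
  | .central _ _ => True

/-- A non-central diagonal crosses the central chord at vertex `c` iff it separates `c` from the
central disc, i.e. `c` lies strictly inside the minor arc cut off by the diagonal. -/
def diagCrossCentral (n : ℕ) (e : Sym2 (ZMod (2 * n))) (c : ZMod (2 * n)) : Prop :=
  ∃ a b : ZMod (2 * n), e = s(a, b) ∧ (b - a).val < n ∧ arcMem (2 * n) a b c

/-- The crossing relation for chords of the punctured `2n`-gon.  Two central chords cross iff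
they have opposite orientations and are based at different vertex pairs. -/
def DChord.Cross (n : ℕ) : DChord n → DChord n → Prop
  | .diag e, .diag f => Crosses (2 * n) e f
  | .diag e, .central c _ => diagCrossCentral n e c
  | .central c _, .diag e => diagCrossCentral n e c
  | .central c b, .central d b' => b ≠ b' ∧ d ≠ c ∧ d ≠ c + (n : ZMod (2 * n))

/-- 180-degree rotation of a chord of the punctured `2n`-gon. -/
def DChord.rot (n : ℕ) : DChord n → DChord n
  | .diag e => .diag (Sym2.map (· + (n : ZMod (2 * n))) e)
  | .central c b => .central (c + (n : ZMod (2 * n))) b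

/-- A triangulation of the punctured `2n`-gon: a maximal set of pairwise non-crossing chords. -/
def DTriangulation (n : ℕ) (T : Finset (DChord n)) : Prop :=
  (∀ e ∈ T, DChord.IsValid n e) ∧
  (∀ e ∈ T, ∀ f ∈ T, ¬ DChord.Cross n e f) ∧
  (∀ e, DChord.IsValid n e → e ∉ T → ∃ f ∈ T, DChord.Cross n e f)

/-- A centrally symmetric triangulation of the punctured `2n`-gon: one invariant under
180-degree rotation. -/
def DCSTriangulation (n : ℕ) (T : Finset (DChord n)) : Prop :=
  DTriangulation n T ∧ ∀ e ∈ T, DChord.rot n e ∈ T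

/-- The 1-skeleton of the type-D associahedron `\U0001d521\u2099`: vertices are the centrally symmetric
triangulations of the punctured `2n`-gon; two triangulations are adjacent iff one is obtained
from the other by flipping a centrally symmetric pair of chords. -/
def typeDGraph (n : ℕ) :
    SimpleGraph {T : Finset (DChord n) // DCSTriangulation n T} where
  Adj T T' := T ≠ T' ∧ (T.val \ T'.val).card ≤ 2 ∧ (T'.val \ T.val).card ≤ 2
  symm := ⟨fun _ _ h => ⟨Ne.symm h.1, h.2.2, h.2.1⟩⟩
  loopless := ⟨fun _ h => h.1 rfl⟩

set_option maxHeartbeats 1600000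

section kit
variable {m : ℕ} [NeZero m]

lemma zval_cast (x : ZMod m) : ((x.val : ℕ) : ZMod m) = x := ZMod.natCast_rightInverse x

lemma zval_sub (x y : ZMod m) :
    (x - y).val = if y.val ≤ x.val then x.val - y.val else x.val + m - y.val := by
  split_ifs with h
  · have h1 : ((x.val - y.val : ℕ) : ZMod m) = x - y := by
      push_cast [Nat.cast_sub h]; rw [zval_cast, zval_cast]
    rw [← h1, ZMod.val_cast_of_lt (by have := x.val_lt; omega)]
  · have h1 : ((x.val + m - y.val : ℕ) : ZMod m) = x - y := by
      have hy : y.val ≤ x.val + m := by have := y.val_lt; omega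
      push_cast [Nat.cast_sub hy]
      simp [zval_cast]
    rw [← h1, ZMod.val_cast_of_lt (by have := x.val_lt; have := y.val_lt; omega)]

lemma zval_add (x y : ZMod m) :
    (x + y).val = if x.val + y.val < m then x.val + y.val else x.val + y.val - m := by
  rw [ZMod.val_add]
  split_ifs with h
  · exact Nat.mod_eq_of_lt h
  · rw [Nat.mod_eq_sub_mod (by omega), Nat.mod_eq_of_lt (by have := x.val_lt; have := y.val_lt; omega)]

lemma zval_eq_iff (x y : ZMod m) : x = y ↔ x.val = y.val :=
  ⟨fun h => by rw [h], fun h => by rw [← zval_cast x, ← zval_cast y, h]⟩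

lemma arcMem_iff (a b x : ZMod m) :
    arcMem m a b x ↔ ((a.val < x.val ∧ (x.val < b.val ∨ b.val < a.val)) ∨
      (x.val < b.val ∧ x.val < a.val ∧ b.val < a.val)) := by
  have := a.val_lt; have := b.val_lt; have := x.val_lt
  unfold arcMem
  rw [zval_sub, zval_sub]
  split_ifs <;> omega

lemma crossPairs_iff (a b c d : ZMod m) :
    crossPairs m a b c d ↔
      (((a.val < c.val ∧ (c.val < b.val ∨ b.val < a.val)) ∨
        (c.val < b.val ∧ c.val < a.val ∧ b.val < a.val)) ∧
       ((b.val < d.val ∧ (d.val < a.val ∨ a.val < b.val)) ∨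
        (d.val < a.val ∧ d.val < b.val ∧ a.val < b.val))) ∨
      (((a.val < d.val ∧ (d.val < b.val ∨ b.val < a.val)) ∨
        (d.val < b.val ∧ d.val < a.val ∧ b.val < a.val)) ∧
       ((b.val < c.val ∧ (c.val < a.val ∨ a.val < b.val)) ∨
        (c.val < a.val ∧ c.val < b.val ∧ a.val < b.val))) := by
  unfold crossPairs
  rw [arcMem_iff, arcMem_iff, arcMem_iff, arcMem_iff]

lemma crossPairs_swap_left (a b c d : ZMod m) :
    crossPairs m a b c d ↔ crossPairs m b a c d := by
  rw [crossPairs_iff, crossPairs_iff]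
  have := a.val_lt; have := b.val_lt; have := c.val_lt; have := d.val_lt
  constructor <;> (intro h; omega)

lemma crossPairs_swap_right (a b c d : ZMod m) :
    crossPairs m a b c d ↔ crossPairs m a b d c := by
  unfold crossPairs; tauto

lemma crossPairs_comm (a b c d : ZMod m) :
    crossPairs m a b c d ↔ crossPairs m c d a b := by
  rw [crossPairs_iff, crossPairs_iff]
  have := a.val_lt; have := b.val_lt; have := c.val_lt; have := d.val_lt
  constructor <;> (intro h; omega)

lemma crosses_mk (a b c d : ZMod m) :
    Crosses m s(a, b) s(c, d) ↔ crossPairs m a b c d := by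
  constructor
  · rintro ⟨a', b', c', d', he, hf, hcp⟩
    rw [Sym2.eq_iff] at he hf
    rcases he with ⟨rfl, rfl⟩ | ⟨rfl, rfl⟩ <;> rcases hf with ⟨rfl, rfl⟩ | ⟨rfl, rfl⟩
    · exact hcp
    · exact (crossPairs_swap_right ..).mpr hcp
    · exact (crossPairs_swap_left ..).mpr hcp
    · exact (crossPairs_swap_left ..).mpr ((crossPairs_swap_right ..).mpr hcp)
  · intro h; exact ⟨a, b, c, d, rfl, rfl, h⟩

end kit

section basics
variable {m : ℕ} [NeZero m]

lemma crossPairs_of_eq {a b c d x y z w : ZMod m} (he : s(x, y) = s(a, b))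
    (hf : s(z, w) = s(c, d)) (h : crossPairs m a b c d) : crossPairs m x y z w := by
  rw [Sym2.eq_iff] at he hf
  rcases he with ⟨rfl, rfl⟩ | ⟨rfl, rfl⟩ <;> rcases hf with ⟨rfl, rfl⟩ | ⟨rfl, rfl⟩
  · exact h
  · exact (crossPairs_swap_right ..).mpr h
  · exact (crossPairs_swap_left ..).mpr h
  · exact (crossPairs_swap_left ..).mpr ((crossPairs_swap_right ..).mpr h)

lemma crosses_mk' (a b c d : ZMod m) :
    Crosses m s(a, b) s(c, d) ↔ crossPairs m a b c d := by
  constructor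
  · rintro ⟨a', b', c', d', he, hf, hcp⟩
    exact crossPairs_of_eq he hf hcp
  · intro h; exact ⟨a, b, c, d, rfl, rfl, h⟩

lemma crosses_comm (e f : Sym2 (ZMod m)) : Crosses m e f ↔ Crosses m f e := by
  induction e using Sym2.ind with | _ x y =>
  induction f using Sym2.ind with | _ z w =>
  rw [crosses_mk', crosses_mk', crossPairs_comm]

lemma crossPairs_shift (t a b c d : ZMod m) :
    crossPairs m (a + t) (b + t) (c + t) (d + t) ↔ crossPairs m a b c d := by
  unfold crossPairs arcMem
  simp only [add_sub_add_right_eq_sub]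

lemma crosses_shift (t : ZMod m) (e f : Sym2 (ZMod m)) :
    Crosses m (Sym2.map (· + t) e) (Sym2.map (· + t) f) ↔ Crosses m e f := by
  induction e using Sym2.ind with | _ x y =>
  induction f using Sym2.ind with | _ z w =>
  simp only [Sym2.map_pair_eq, crosses_mk', crossPairs_shift]

end basics

section dbasics
variable {n : ℕ}

lemma diagCross_mk (x y c : ZMod (2 * n)) :
    diagCrossCentral n s(x, y) c ↔
      ((y - x).val < n ∧ arcMem (2 * n) x y c) ∨ ((x - y).val < n ∧ arcMem (2 * n) y x c) := by
  constructor
  · rintro ⟨a, b, he, h1, h2⟩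
    rw [Sym2.eq_iff] at he
    rcases he with ⟨rfl, rfl⟩ | ⟨rfl, rfl⟩
    · exact Or.inl ⟨h1, h2⟩
    · exact Or.inr ⟨h1, h2⟩
  · rintro (⟨h1, h2⟩ | ⟨h1, h2⟩)
    · exact ⟨x, y, rfl, h1, h2⟩
    · exact ⟨y, x, Sym2.eq_swap.symm, h1, h2⟩

lemma nn_zero : ((n : ZMod (2 * n)) + (n : ZMod (2 * n))) = 0 := by
  rw [← Nat.cast_add, ← two_mul, ZMod.natCast_self]

lemma add_nn (x : ZMod (2 * n)) :
    x + (n : ZMod (2 * n)) + (n : ZMod (2 * n)) = x := by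
  rw [add_assoc, nn_zero, add_zero]

lemma rot_rot (e : DChord n) : DChord.rot n (DChord.rot n e) = e := by
  have hfun : ((· + (n : ZMod (2*n))) ∘ (· + (n : ZMod (2*n)))) = id :=
    funext fun x => add_nn x
  cases e with
  | diag e => simp only [DChord.rot, Sym2.map_map, hfun, Sym2.map_id, Sym2.map_id', id_eq]
  | central c b => simp only [DChord.rot, add_nn]

lemma cross_rot [NeZero (2 * n)] (e f : DChord n) :
    DChord.Cross n (DChord.rot n e) (DChord.rot n f) ↔ DChord.Cross n e f := by
  cases e with
  | diag e =>
    cases f with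
    | diag f => exact crosses_shift ..
    | central c b =>
      show diagCrossCentral n (Sym2.map _ e) _ ↔ diagCrossCentral n e c
      induction e using Sym2.ind with | _ x y =>
      rw [Sym2.map_pair_eq, diagCross_mk, diagCross_mk]
      unfold arcMem
      simp only [add_sub_add_right_eq_sub]
  | central c b =>
    cases f with
    | diag f =>
      show diagCrossCentral n (Sym2.map _ f) _ ↔ diagCrossCentral n f c
      induction f using Sym2.ind with | _ x y =>
      rw [Sym2.map_pair_eq, diagCross_mk, diagCross_mk]
      unfold arcMem
      simp only [add_sub_add_right_eq_sub]
    | central d b' =>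
      show _ ≠ _ ∧ _ ≠ _ ∧ _ ≠ _ ↔ _ ≠ _ ∧ _ ≠ _ ∧ _ ≠ _
      constructor
      · rintro ⟨h1, h2, h3⟩
        exact ⟨h1, fun h => h2 (by rw [h]), fun h => h3 (by rw [h])⟩
      · rintro ⟨h1, h2, h3⟩
        exact ⟨h1, fun h => h2 (add_right_cancel h),
          fun h => h3 (by rw [← add_nn d, h, add_nn])⟩

lemma dcross_comm [NeZero (2 * n)] (e f : DChord n) :
    DChord.Cross n e f ↔ DChord.Cross n f e := by
  cases e with
  | diag e =>
    cases f with
    | diag f => exact crosses_comm e f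
    | central c b => exact Iff.rfl
  | central c b =>
    cases f with
    | diag f => exact Iff.rfl
    | central d b' =>
      show _ ≠ _ ∧ _ ≠ _ ∧ _ ≠ _ ↔ _ ≠ _ ∧ _ ≠ _ ∧ _ ≠ _
      have key : ∀ x y : ZMod (2*n), x = y + (n : ZMod (2*n)) → y = x + (n : ZMod (2*n)) := by
        intro x y h
        rw [h, add_nn]
      constructor <;> rintro ⟨h1, h2, h3⟩ <;>
        exact ⟨h1.symm, fun h => h2 h.symm, fun h => h3 (key _ _ h)⟩
end dbasics

def toDfun (n : ℕ) (a : ZMod (2 * n)) (i j : ZMod (n + 2)) : DChord n :=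
  if i.val = n + 1 then .central (a + (j.val : ZMod (2 * n))) true
  else if j.val = n + 1 then .central (a + (i.val : ZMod (2 * n))) true
  else if (i.val = 0 ∧ j.val = n) ∨ (i.val = n ∧ j.val = 0) then .central a false
  else .diag s(a + (i.val : ZMod (2 * n)), a + (j.val : ZMod (2 * n)))

lemma toDfun_symm (n : ℕ) (a : ZMod (2 * n)) :
    ∀ i j, toDfun n a i j = toDfun n a j i := by
  intro i j
  unfold toDfun
  split_ifs <;>
    first
      | rfl
      | omega
      | simp_all
      | exact congrArg DChord.diag Sym2.eq_swap

def toD (n : ℕ) (a : ZMod (2 * n)) : Sym2 (ZMod (n + 2)) → DChord n :=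
  Sym2.lift ⟨toDfun n a, toDfun_symm n a⟩

lemma toD_mk (n : ℕ) (a : ZMod (2 * n)) (i j : ZMod (n + 2)) :
    toD n a s(i, j) = toDfun n a i j := Sym2.lift_mk ..

section evals
variable {n : ℕ} (a : ZMod (2 * n))

lemma vval (u : ℕ) (h : u < n + 2) : ((u : ZMod (n + 2))).val = u :=
  ZMod.val_cast_of_lt h

lemma toD_ct {u : ℕ} (hu1 : 1 ≤ u) (hu2 : u < n) :
    toD n a s((u : ZMod (n + 2)), ((n + 1 : ℕ) : ZMod (n + 2))) =
      DChord.central (a + (u : ZMod (2 * n))) true := by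
  rw [toD_mk]
  unfold toDfun
  rw [vval u (by omega), vval (n+1) (by omega)]
  rw [if_neg (by omega), if_pos rfl]

lemma toD_cf :
    toD n a s(((0 : ℕ) : ZMod (n + 2)), ((n : ℕ) : ZMod (n + 2))) =
      DChord.central a false := by
  rw [toD_mk]
  unfold toDfun
  rw [vval 0 (by omega), vval n (by omega)]
  rw [if_neg (by omega), if_neg (by omega), if_pos (by omega)]

lemma toD_dg {u v : ℕ} (hu : u < v) (hv : v ≤ n) (hne : ¬(u = 0 ∧ v = n)) :
    toD n a s((u : ZMod (n + 2)), (v : ZMod (n + 2))) =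
      DChord.diag s(a + (u : ZMod (2 * n)), a + (v : ZMod (2 * n))) := by
  rw [toD_mk]
  unfold toDfun
  rw [vval u (by omega), vval v (by omega)]
  rw [if_neg (by omega), if_neg (by omega), if_neg (by omega)]

lemma isDiag_mk {u v : ℕ} (huv : u + 2 ≤ v) (hv : v ≤ n + 1) (hne : ¬(u = 0 ∧ v = n + 1)) :
    IsDiagonal (n + 2) s((u : ZMod (n + 2)), (v : ZMod (n + 2))) := by
  refine ⟨(u : ZMod (n + 2)), (v : ZMod (n + 2)), rfl, ?_, ?_, ?_⟩
  · intro h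
    rw [zval_eq_iff, vval u (by omega), vval v (by omega)] at h
    omega
  · intro h
    rw [show ((u : ZMod (n+2)) + 1) = ((u + 1 : ℕ) : ZMod (n + 2)) by push_cast; ring] at h
    rw [zval_eq_iff, vval v (by omega), vval (u+1) (by omega)] at h
    omega
  · intro h
    rw [show ((v : ZMod (n+2)) + 1) = ((v + 1 : ℕ) : ZMod (n + 2)) by push_cast; ring] at h
    rcases Nat.lt_or_ge v (n + 1) with hv' | hv'
    · rw [zval_eq_iff, vval u (by omega), vval (v+1) (by omega)] at h
      omega
    · have hv2 : v = n + 1 := by omega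
      subst hv2
      rw [show ((n + 1 + 1 : ℕ) : ZMod (n + 2)) = 0 by
        rw [show n + 1 + 1 = n + 2 by ring, ZMod.natCast_self]] at h
      rw [zval_eq_iff, vval u (by omega), ZMod.val_zero] at h
      omega

lemma diag_normal {d : Sym2 (ZMod (n + 2))} (hd : IsDiagonal (n + 2) d) :
    ∃ u v : ℕ, u + 2 ≤ v ∧ v ≤ n + 1 ∧ ¬(u = 0 ∧ v = n + 1) ∧
      d = s((u : ZMod (n + 2)), (v : ZMod (n + 2))) := by
  obtain ⟨i, j, rfl, h1, h2, h3⟩ := hd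
  have hij : i.val ≠ j.val := fun h => h1 (by rw [zval_eq_iff]; exact h)
  have hiv := i.val_lt
  have hjv := j.val_lt
  have kcast : ∀ k : ZMod (n + 2), ((k.val : ℕ) : ZMod (n + 2)) = k := fun k => zval_cast k
  have hadd : ∀ k : ZMod (n + 2), k + 1 = ((k.val + 1 : ℕ) : ZMod (n + 2)) := by
    intro k; push_cast [kcast]; ring
  rcases Nat.lt_or_ge i.val j.val with hlt | hge
  · refine ⟨i.val, j.val, ?_, by omega, ?_, by rw [kcast, kcast]⟩
    · -- j.val ≥ i.val + 2
      rcases Nat.lt_or_ge (i.val + 1) j.val with h | h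
      · omega
      · exfalso; apply h2
        have : j.val = i.val + 1 := by omega
        rw [← kcast j, this, hadd i]
    · rintro ⟨hz, ho⟩
      apply h3
      have h0 : ((n + 1 + 1 : ℕ) : ZMod (n + 2)) = 0 := ZMod.natCast_self (n + 2)
      rw [hadd j, ho, h0, ← kcast i, hz]
      norm_num
  · have hlt : j.val < i.val := by omega
    refine ⟨j.val, i.val, ?_, by omega, ?_, by rw [kcast, kcast]; exact Sym2.eq_swap.symm⟩
    · rcases Nat.lt_or_ge (j.val + 1) i.val with h | h
      · omega
      · exfalso; apply h3
        have : i.val = j.val + 1 := by omega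
        rw [← kcast i, this, hadd j]
    · rintro ⟨hz, ho⟩
      apply h2
      have h0 : ((n + 1 + 1 : ℕ) : ZMod (n + 2)) = 0 := ZMod.natCast_self (n + 2)
      rw [hadd i, ho, h0, ← kcast j, hz]
      norm_num
end evals

section clemmas
variable {n : ℕ} (a : ZMod (2 * n))

lemma val_aa [NeZero (2 * n)] (u : ℕ) (h : u ≤ 2 * n) :
    (a + (u : ZMod (2 * n))).val =
      if u = 2 * n then a.val
      else if a.val + u < 2 * n then a.val + u else a.val + u - 2 * n := by
  rcases eq_or_lt_of_le h with rfl | h'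
  · simp [ZMod.natCast_self]
  · rw [if_neg (by omega), zval_add, ZMod.val_cast_of_lt h']

lemma crossA_iff (hn : 2 ≤ n) {u v w z : ℕ} (hu : u < v) (hv : v ≤ n + 1)
    (hw : w < z) (hz : z ≤ n + 1) :
    Crosses (n + 2) s((u : ZMod (n+2)), (v : ZMod (n+2))) s((w : ZMod (n+2)), (z : ZMod (n+2))) ↔
      ((u < w ∧ w < v ∧ v < z) ∨ (w < u ∧ u < z ∧ z < v)) := by
  rw [crosses_mk', crossPairs_iff]
  rw [vval u (by omega), vval v (by omega), vval w (by omega), vval z (by omega)]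
  omega

lemma crossD_dg_dg (hn : 2 ≤ n) {u v w z : ℕ} (hu : u < v) (hv : v ≤ n) (hvu : v < u + n)
    (hw : w < z) (hz : z ≤ n) (hzw : z < w + n) :
    DChord.Cross n (.diag s(a + (u : ZMod (2*n)), a + (v : ZMod (2*n))))
        (.diag s(a + (w : ZMod (2*n)), a + (z : ZMod (2*n)))) ↔
      ((u < w ∧ w < v ∧ v < z) ∨ (w < u ∧ u < z ∧ z < v)) := by
  haveI : NeZero (2 * n) := ⟨by omega⟩
  have ha := a.val_lt
  have e1 := val_aa a u (by omega)
  have e2 := val_aa a v (by omega)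
  have e3 := val_aa a w (by omega)
  have e4 := val_aa a z (by omega)
  show Crosses _ _ _ ↔ _
  rw [crosses_mk', crossPairs_iff]
  simp only [e1, e2, e3, e4]
  split_ifs <;> omega

lemma crossD_dg_ct (hn : 2 ≤ n) {u v t : ℕ} (hu : u < v) (hv : v ≤ n) (hvu : v < u + n)
    (ht : t < 2 * n) :
    diagCrossCentral n s(a + (u : ZMod (2*n)), a + (v : ZMod (2*n))) (a + (t : ZMod (2*n))) ↔
      (u < t ∧ t < v) := by
  haveI : NeZero (2 * n) := ⟨by omega⟩
  have ha := a.val_lt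
  have e1 := val_aa a u (by omega)
  have e2 := val_aa a v (by omega)
  have e3 := val_aa a t (by omega)
  rw [diagCross_mk]
  simp only [arcMem_iff, zval_sub, e1, e2, e3]
  split_ifs <;> omega

lemma crossD_dg_rot (hn : 2 ≤ n) {u v w z : ℕ} (hu : u < v) (hv : v ≤ n) (hvu : v < u + n)
    (hw : w < z) (hz : z ≤ n) (hzw : z < w + n) :
    ¬ DChord.Cross n (.diag s(a + (u : ZMod (2*n)), a + (v : ZMod (2*n))))
        (.diag s(a + ((w + n : ℕ) : ZMod (2*n)), a + ((z + n : ℕ) : ZMod (2*n)))) := by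
  haveI : NeZero (2 * n) := ⟨by omega⟩
  have ha := a.val_lt
  have e1 := val_aa a u (by omega)
  have e2 := val_aa a v (by omega)
  have e3 := val_aa a (w + n) (by omega)
  have e4 := val_aa a (z + n) (by omega)
  show ¬ Crosses _ _ _
  rw [crosses_mk', crossPairs_iff]
  simp only [e1, e2, e3, e4]
  split_ifs <;> omega

lemma crossD_rot_ct (hn : 2 ≤ n) {w z t : ℕ} (hw : w < z) (hz : z ≤ n) (hzw : z < w + n)
    (ht : t < 2 * n) :
    diagCrossCentral n s(a + ((w + n : ℕ) : ZMod (2*n)), a + ((z + n : ℕ) : ZMod (2*n)))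
        (a + (t : ZMod (2*n))) ↔ (w + n < t ∧ t < z + n) := by
  haveI : NeZero (2 * n) := ⟨by omega⟩
  have ha := a.val_lt
  have e1 := val_aa a (w + n) (by omega)
  have e2 := val_aa a (z + n) (by omega)
  have e3 := val_aa a t (by omega)
  rw [diagCross_mk]
  simp only [arcMem_iff, zval_sub, e1, e2, e3]
  split_ifs <;> omega

lemma eq_aa (hn : 2 ≤ n) {u w : ℕ} (hu : u ≤ 2 * n) (hw : w ≤ 2 * n) :
    (a + (u : ZMod (2*n)) = a + (w : ZMod (2*n))) ↔ (u % (2 * n) = w % (2 * n)) := by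
  haveI : NeZero (2 * n) := ⟨by omega⟩
  have ha := a.val_lt
  have e1 := val_aa a u (by omega)
  have e2 := val_aa a w (by omega)
  have m1 : u % (2 * n) = if u = 2 * n then 0 else u := by
    rcases eq_or_lt_of_le hu with rfl | h
    · simp
    · rw [if_neg (by omega)]; exact Nat.mod_eq_of_lt h
  have m2 : w % (2 * n) = if w = 2 * n then 0 else w := by
    rcases eq_or_lt_of_le hw with rfl | h
    · simp
    · rw [if_neg (by omega)]; exact Nat.mod_eq_of_lt h
  rw [zval_eq_iff]
  simp only [e1, e2, m1, m2]
  split_ifs <;> omega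

end clemmas

section helpers
variable {n : ℕ} (a : ZMod (2 * n))

lemma addn (k : ℕ) :
    a + (k : ZMod (2*n)) + (n : ZMod (2*n)) = a + ((k + n : ℕ) : ZMod (2*n)) := by
  push_cast; ring

lemma cast_eq_iff (hn : 2 ≤ n) {u w : ℕ} (hu : u ≤ 2*n) (hw : w ≤ 2*n) :
    ((u : ZMod (2*n)) = (w : ZMod (2*n))) ↔
      (u = w ∨ (u = 2*n ∧ w = 0) ∨ (u = 0 ∧ w = 2*n)) := by
  haveI : NeZero (2*n) := ⟨by omega⟩
  have m1 : u % (2*n) = if u = 2*n then 0 else u := by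
    rcases eq_or_lt_of_le hu with rfl | h
    · simp
    · rw [if_neg (by omega)]; exact Nat.mod_eq_of_lt h
  have m2 : w % (2*n) = if w = 2*n then 0 else w := by
    rcases eq_or_lt_of_le hw with rfl | h
    · simp
    · rw [if_neg (by omega)]; exact Nat.mod_eq_of_lt h
  rw [zval_eq_iff, ZMod.val_natCast, ZMod.val_natCast, m1, m2]
  split_ifs <;> omega

lemma rot_diag (x y : ZMod (2*n)) :
    DChord.rot n (.diag s(x, y)) = .diag s(x + (n : ZMod (2*n)), y + (n : ZMod (2*n))) := by
  simp [DChord.rot, Sym2.map_pair_eq]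

lemma rot_dg (u v : ℕ) :
    DChord.rot n (.diag s(a + (u : ZMod (2*n)), a + (v : ZMod (2*n)))) =
      .diag s(a + ((u + n : ℕ) : ZMod (2*n)), a + ((v + n : ℕ) : ZMod (2*n))) := by
  rw [rot_diag, addn, addn]

lemma rot_ct (u : ℕ) (b : Bool) :
    DChord.rot n (.central (a + (u : ZMod (2*n))) b) =
      .central (a + ((u + n : ℕ) : ZMod (2*n))) b := by
  simp [DChord.rot, addn]

lemma rot_ct0 (b : Bool) :
    DChord.rot n (.central a b) = .central (a + (n : ZMod (2*n))) b := rfl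

lemma cross_ct_ct (hn : 2 ≤ n) {u w : ℕ} (hu : u ≤ n) (hw : w ≤ 2*n) {b b' : Bool} :
    DChord.Cross n (.central (a + (u : ZMod (2*n))) b) (.central (a + (w : ZMod (2*n))) b') ↔
      (b ≠ b' ∧ ¬(w = u ∨ (w = 2*n ∧ u = 0) ∨ (w = 0 ∧ u = 2*n)) ∧
        ¬(w = u + n ∨ (w = 2*n ∧ u + n = 0) ∨ (w = 0 ∧ u + n = 2*n))) := by
  show b ≠ b' ∧ _ ≠ _ ∧ _ ≠ _ ↔ _
  rw [addn a u, Ne, Ne, Ne, add_right_inj, add_right_inj,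
    cast_eq_iff hn hw (by omega), cast_eq_iff hn hw (by omega)]

lemma valid_dg (hn : 2 ≤ n) {u v : ℕ} (hu : u < v) (hv : v ≤ n) (h2 : u + 2 ≤ v)
    (hgap : v < u + n) :
    DChord.IsValid n (.diag s(a + (u : ZMod (2*n)), a + (v : ZMod (2*n)))) := by
  haveI : NeZero (2*n) := ⟨by omega⟩
  have c1 : (a + (u : ZMod (2*n))) + 1 = a + ((u + 1 : ℕ) : ZMod (2*n)) := by push_cast; ring
  have c2 : (a + (v : ZMod (2*n))) + 1 = a + ((v + 1 : ℕ) : ZMod (2*n)) := by push_cast; ring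
  refine ⟨_, _, rfl, ?_, ?_, ?_, ?_⟩
  · rw [Ne, add_right_inj, cast_eq_iff hn (by omega) (by omega)]; omega
  · rw [c1, Ne, add_right_inj, cast_eq_iff hn (by omega) (by omega)]; omega
  · rw [c2, Ne, add_right_inj, cast_eq_iff hn (by omega) (by omega)]; omega
  · rw [addn a u, Ne, add_right_inj, cast_eq_iff hn (by omega) (by omega)]; omega

lemma valid_rot (hn : 2 ≤ n) {e : DChord n} (h : DChord.IsValid n e) :
    DChord.IsValid n (DChord.rot n e) := by
  haveI : NeZero (2*n) := ⟨by omega⟩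
  cases e with
  | central c b => trivial
  | diag e =>
    obtain ⟨x, y, rfl, h1, h2, h3, h4⟩ := h
    rw [rot_diag]
    refine ⟨_, _, rfl, ?_, ?_, ?_, ?_⟩
    · exact fun h => h1 (add_right_cancel h)
    · intro h
      apply h2
      have : y + (n:ZMod (2*n)) = (x + 1) + (n:ZMod (2*n)) := by rw [h]; ring
      exact add_right_cancel this
    · intro h
      apply h3
      have : x + (n:ZMod (2*n)) = (y + 1) + (n:ZMod (2*n)) := by rw [h]; ring
      exact add_right_cancel this
    · intro h
      apply h4
      rw [← add_nn y, h, add_nn x]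
end helpers

section xlemmas
variable {n : ℕ} (a : ZMod (2 * n))

lemma toD_cf' :
    toD n a s(((0 : ℕ) : ZMod (n + 2)), ((n : ℕ) : ZMod (n + 2))) =
      DChord.central (a + ((0 : ℕ) : ZMod (2 * n))) false := by
  rw [toD_cf]; simp

lemma add_cast_eq_self (hn : 2 ≤ n) {u : ℕ} (hu : u < 2*n) :
    (a + (u : ZMod (2*n)) = a) ↔ u = 0 := by
  haveI : NeZero (2*n) := ⟨by omega⟩
  constructor
  · intro h
    conv_rhs at h => rw [← add_zero a]
    have h2 : (u : ZMod (2*n)) = 0 := add_right_inj a |>.mp h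
    rw [← ZMod.val_cast_of_lt hu, h2, ZMod.val_zero]
  · rintro rfl; simp

lemma diag_cases {d : Sym2 (ZMod (n + 2))} (hd : IsDiagonal (n + 2) d) :
    (∃ u : ℕ, 1 ≤ u ∧ u < n ∧ d = s((u : ZMod (n+2)), ((n+1 : ℕ) : ZMod (n+2)))) ∨
    (d = s(((0:ℕ) : ZMod (n+2)), ((n:ℕ) : ZMod (n+2)))) ∨
    (∃ u v : ℕ, u < v ∧ v ≤ n ∧ u + 2 ≤ v ∧ ¬(u = 0 ∧ v = n) ∧
      d = s((u : ZMod (n+2)), (v : ZMod (n+2)))) := by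
  obtain ⟨u, v, h2, hv, hne, rfl⟩ := diag_normal hd
  rcases Nat.lt_or_ge v (n+1) with hv' | hv'
  · rcases Nat.eq_zero_or_pos u with rfl | hu
    · rcases Nat.lt_or_ge v n with hvn | hvn
      · exact Or.inr (Or.inr ⟨0, v, by omega, by omega, by omega, by omega, rfl⟩)
      · have : v = n := by omega
        subst this
        exact Or.inr (Or.inl rfl)
    · exact Or.inr (Or.inr ⟨u, v, by omega, by omega, by omega, by omega, rfl⟩)
  · have : v = n + 1 := by omega
    subst this
    exact Or.inl ⟨u, by omega, by omega, rfl⟩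

lemma crossW_dg_ct (hn : 2 ≤ n) {u v t : ℕ} (hu : u < v) (hv : v ≤ n) (hvu : v < u + n)
    (ht : t < 2 * n) (b : Bool) :
    DChord.Cross n (.diag s(a + (u : ZMod (2*n)), a + (v : ZMod (2*n))))
      (.central (a + (t : ZMod (2*n))) b) ↔ (u < t ∧ t < v) :=
  crossD_dg_ct a hn hu hv hvu ht

lemma crossW_ct_dg (hn : 2 ≤ n) {u v t : ℕ} (hu : u < v) (hv : v ≤ n) (hvu : v < u + n)
    (ht : t < 2 * n) (b : Bool) :
    DChord.Cross n (.central (a + (t : ZMod (2*n))) b)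
      (.diag s(a + (u : ZMod (2*n)), a + (v : ZMod (2*n)))) ↔ (u < t ∧ t < v) :=
  crossD_dg_ct a hn hu hv hvu ht

lemma crossW_ct_rot (hn : 2 ≤ n) {w z t : ℕ} (hw : w < z) (hz : z ≤ n) (hzw : z < w + n)
    (ht : t < 2 * n) (b : Bool) :
    DChord.Cross n (.central (a + (t : ZMod (2*n))) b)
      (.diag s(a + ((w + n : ℕ) : ZMod (2*n)), a + ((z + n : ℕ) : ZMod (2*n)))) ↔
      (w + n < t ∧ t < z + n) :=
  crossD_rot_ct a hn hw hz hzw ht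

lemma X1 (hn : 2 ≤ n) {d d' : Sym2 (ZMod (n + 2))} (hd : IsDiagonal (n + 2) d)
    (hd' : IsDiagonal (n + 2) d') :
    DChord.Cross n (toD n a d) (toD n a d') ↔ Crosses (n + 2) d d' := by
  rcases diag_cases hd with ⟨u, hu1, hu2, rfl⟩ | rfl | ⟨u, v, huv, hvn, hu2, hune, rfl⟩ <;>
    rcases diag_cases hd' with ⟨w, hw1, hw2, rfl⟩ | rfl | ⟨w, z, hwz, hzn, hw2, hwne, rfl⟩
  · rw [toD_ct a hu1 hu2, toD_ct a hw1 hw2, cross_ct_ct a hn (by omega) (by omega),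
      crossA_iff hn (by omega) (by omega) (by omega) (by omega)]
    simp <;> omega
  · rw [toD_ct a hu1 hu2, toD_cf' a, cross_ct_ct a hn (by omega) (by omega),
      crossA_iff hn (by omega) (by omega) (by omega) (by omega)]
    simp <;> omega
  · rw [toD_ct a hu1 hu2, toD_dg a hwz hzn hwne,
      crossW_ct_dg a hn hwz hzn (by omega) (by omega),
      crossA_iff hn (by omega) (by omega) hwz (by omega)]
    omega
  · rw [toD_cf' a, toD_ct a hw1 hw2, cross_ct_ct a hn (by omega) (by omega),
      crossA_iff hn (by omega) (by omega) (by omega) (by omega)]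
    simp <;> omega
  · rw [toD_cf' a, cross_ct_ct a hn (by omega) (by omega),
      crossA_iff hn (by omega) (by omega) (by omega) (by omega)]
    simp <;> omega
  · rw [toD_cf' a, toD_dg a hwz hzn hwne,
      crossW_ct_dg a hn hwz hzn (by omega) (by omega),
      crossA_iff hn (by omega) (by omega) hwz (by omega)]
    omega
  · rw [toD_dg a huv hvn hune, toD_ct a hw1 hw2,
      crossW_dg_ct a hn huv hvn (by omega) (by omega),
      crossA_iff hn huv (by omega) (by omega) (by omega)]
    omega
  · rw [toD_dg a huv hvn hune, toD_cf' a,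
      crossW_dg_ct a hn huv hvn (by omega) (by omega),
      crossA_iff hn huv (by omega) (by omega) (by omega)]
    omega
  · rw [toD_dg a huv hvn hune, toD_dg a hwz hzn hwne,
      crossD_dg_dg a hn huv hvn (by omega) hwz hzn (by omega),
      crossA_iff hn huv (by omega) hwz (by omega)]

lemma X3 (hn : 2 ≤ n) {d : Sym2 (ZMod (n + 2))} (hd : IsDiagonal (n + 2) d)
    {t : ℕ} (ht : t = 0 ∨ t = n) :
    ¬ DChord.Cross n (toD n a d) (.central (a + (t : ZMod (2*n))) true) := by
  rcases diag_cases hd with ⟨u, hu1, hu2, rfl⟩ | rfl | ⟨u, v, huv, hvn, hu2, hune, rfl⟩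
  · rw [toD_ct a hu1 hu2, cross_ct_ct a hn (by omega) (by omega)]
    simp
  · rw [toD_cf' a, cross_ct_ct a hn (by omega) (by omega)]
    simp <;> omega
  · rw [toD_dg a huv hvn hune, crossW_dg_ct a hn huv hvn (by omega) (by omega)]
    omega

lemma X2 (hn : 2 ≤ n) {d d' : Sym2 (ZMod (n + 2))} (hd : IsDiagonal (n + 2) d)
    (hd' : IsDiagonal (n + 2) d') :
    DChord.Cross n (toD n a d) (DChord.rot n (toD n a d')) → Crosses (n + 2) d d' := by
  intro h
  rcases diag_cases hd with ⟨u, hu1, hu2, rfl⟩ | rfl | ⟨u, v, huv, hvn, hu2, hune, rfl⟩ <;>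
    rcases diag_cases hd' with ⟨w, hw1, hw2, rfl⟩ | rfl | ⟨w, z, hwz, hzn, hw2, hwne, rfl⟩
  · rw [toD_ct a hu1 hu2, toD_ct a hw1 hw2, rot_ct,
      cross_ct_ct a hn (by omega) (by omega)] at h
    simp at h
  · rw [toD_ct a hu1 hu2, toD_cf' a, rot_ct,
      cross_ct_ct a hn (by omega) (by omega)] at h
    rw [crossA_iff hn (by omega) (by omega) (by omega) (by omega)]
    omega
  · rw [toD_ct a hu1 hu2, toD_dg a hwz hzn hwne, rot_dg,
      crossW_ct_rot a hn hwz hzn (by omega) (by omega)] at h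
    exact absurd h (by omega)
  · rw [toD_cf' a, toD_ct a hw1 hw2, rot_ct,
      cross_ct_ct a hn (by omega) (by omega)] at h
    rw [crossA_iff hn (by omega) (by omega) (by omega) (by omega)]
    omega
  · rw [toD_cf' a, rot_ct, cross_ct_ct a hn (by omega) (by omega)] at h
    simp at h
  · rw [toD_cf' a, toD_dg a hwz hzn hwne, rot_dg,
      crossW_ct_rot a hn hwz hzn (by omega) (by omega)] at h
    exact absurd h (by omega)
  · rw [toD_dg a huv hvn hune, toD_ct a hw1 hw2, rot_ct,
      crossW_dg_ct a hn huv hvn (by omega) (by omega)] at h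
    exact absurd h (by omega)
  · rw [toD_dg a huv hvn hune, toD_cf' a, rot_ct,
      crossW_dg_ct a hn huv hvn (by omega) (by omega)] at h
    exact absurd h (by omega)
  · rw [toD_dg a huv hvn hune, toD_dg a hwz hzn hwne, rot_dg] at h
    exact absurd h (crossD_dg_rot a hn huv hvn (by omega) hwz hzn (by omega))

lemma I1 (hn : 2 ≤ n) {d : Sym2 (ZMod (n + 2))} (hd : IsDiagonal (n + 2) d) :
    toD n a d ≠ .central a true ∧ toD n a d ≠ .central (a + (n : ZMod (2*n))) true := by
  haveI : NeZero (2*n) := ⟨by omega⟩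
  rcases diag_cases hd with ⟨u, hu1, hu2, rfl⟩ | rfl | ⟨u, v, huv, hvn, hu2, hune, rfl⟩
  · rw [toD_ct a hu1 hu2]
    constructor <;> intro h <;> rw [DChord.central.injEq] at h
    · have := (add_cast_eq_self a hn (by omega)).mp h.1
      omega
    · have := (cast_eq_iff hn (u := u) (w := n) (by omega) (by omega)).mp
        (add_right_inj a |>.mp h.1)
      omega
  · rw [toD_cf' a]
    constructor <;> intro h <;> rw [DChord.central.injEq] at h <;> exact Bool.noConfusion h.2
  · rw [toD_dg a huv hvn hune]
    constructor <;> exact fun h => nomatch h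

lemma I2 (hn : 2 ≤ n) {d d' : Sym2 (ZMod (n + 2))} (hd : IsDiagonal (n + 2) d)
    (hd' : IsDiagonal (n + 2) d') (h : toD n a d = toD n a d') : d = d' := by
  haveI : NeZero (2*n) := ⟨by omega⟩
  rcases diag_cases hd with ⟨u, hu1, hu2, rfl⟩ | rfl | ⟨u, v, huv, hvn, hu2, hune, rfl⟩ <;>
    rcases diag_cases hd' with ⟨w, hw1, hw2, rfl⟩ | rfl | ⟨w, z, hwz, hzn, hw2, hwne, rfl⟩
  · rw [toD_ct a hu1 hu2, toD_ct a hw1 hw2, DChord.central.injEq] at h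
    have := (cast_eq_iff hn (u := u) (w := w) (by omega) (by omega)).mp
      (add_right_inj a |>.mp h.1)
    have huw : u = w := by omega
    subst huw; rfl
  · rw [toD_ct a hu1 hu2, toD_cf' a, DChord.central.injEq] at h
    exact Bool.noConfusion h.2
  · rw [toD_ct a hu1 hu2, toD_dg a hwz hzn hwne] at h
    exact nomatch h
  · rw [toD_cf' a, toD_ct a hw1 hw2, DChord.central.injEq] at h
    exact Bool.noConfusion h.2
  · rfl
  · rw [toD_cf' a, toD_dg a hwz hzn hwne] at h
    exact nomatch h
  · rw [toD_dg a huv hvn hune, toD_ct a hw1 hw2] at h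
    exact nomatch h
  · rw [toD_dg a huv hvn hune, toD_cf' a] at h
    exact nomatch h
  · rw [toD_dg a huv hvn hune, toD_dg a hwz hzn hwne, DChord.diag.injEq, Sym2.eq_iff] at h
    rcases h with ⟨h1, h2⟩ | ⟨h1, h2⟩
    · have e1 := (cast_eq_iff hn (u := u) (w := w) (by omega) (by omega)).mp
        (add_right_inj a |>.mp h1)
      have e2 := (cast_eq_iff hn (u := v) (w := z) (by omega) (by omega)).mp
        (add_right_inj a |>.mp h2)
      have : u = w ∧ v = z := by omega
      rw [this.1, this.2]
    · have e1 := (cast_eq_iff hn (u := u) (w := z) (by omega) (by omega)).mp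
        (add_right_inj a |>.mp h1)
      have e2 := (cast_eq_iff hn (u := v) (w := w) (by omega) (by omega)).mp
        (add_right_inj a |>.mp h2)
      omega

lemma I3 (hn : 2 ≤ n) {d d' : Sym2 (ZMod (n + 2))} (hd : IsDiagonal (n + 2) d)
    (hd' : IsDiagonal (n + 2) d') : toD n a d ≠ DChord.rot n (toD n a d') := by
  haveI : NeZero (2*n) := ⟨by omega⟩
  intro h
  rcases diag_cases hd with ⟨u, hu1, hu2, rfl⟩ | rfl | ⟨u, v, huv, hvn, hu2, hune, rfl⟩ <;>
    rcases diag_cases hd' with ⟨w, hw1, hw2, rfl⟩ | rfl | ⟨w, z, hwz, hzn, hw2, hwne, rfl⟩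
  · rw [toD_ct a hu1 hu2, toD_ct a hw1 hw2, rot_ct, DChord.central.injEq] at h
    have := (cast_eq_iff hn (u := u) (w := w + n) (by omega) (by omega)).mp
      (add_right_inj a |>.mp h.1)
    omega
  · rw [toD_ct a hu1 hu2, toD_cf' a, rot_ct, DChord.central.injEq] at h
    exact Bool.noConfusion h.2
  · rw [toD_ct a hu1 hu2, toD_dg a hwz hzn hwne, rot_dg] at h
    exact nomatch h
  · rw [toD_cf' a, toD_ct a hw1 hw2, rot_ct, DChord.central.injEq] at h
    exact Bool.noConfusion h.2
  · rw [toD_cf' a, rot_ct, DChord.central.injEq] at h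
    have := (cast_eq_iff hn (u := 0) (w := 0 + n) (by omega) (by omega)).mp
      (add_right_inj a |>.mp h.1)
    omega
  · rw [toD_cf' a, toD_dg a hwz hzn hwne, rot_dg] at h
    exact nomatch h
  · rw [toD_dg a huv hvn hune, toD_ct a hw1 hw2, rot_ct] at h
    exact nomatch h
  · rw [toD_dg a huv hvn hune, toD_cf' a, rot_ct] at h
    exact nomatch h
  · rw [toD_dg a huv hvn hune, toD_dg a hwz hzn hwne, rot_dg, DChord.diag.injEq,
      Sym2.eq_iff] at h
    rcases h with ⟨h1, h2⟩ | ⟨h1, h2⟩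
    · have e1 := (cast_eq_iff hn (u := u) (w := w + n) (by omega) (by omega)).mp
        (add_right_inj a |>.mp h1)
      omega
    · have e1 := (cast_eq_iff hn (u := u) (w := z + n) (by omega) (by omega)).mp
        (add_right_inj a |>.mp h1)
      have e2 := (cast_eq_iff hn (u := v) (w := w + n) (by omega) (by omega)).mp
        (add_right_inj a |>.mp h2)
      omega

lemma I4 (hn : 2 ≤ n) {d : Sym2 (ZMod (n + 2))} (hd : IsDiagonal (n + 2) d) :
    DChord.rot n (toD n a d) ≠ .central a true ∧
      DChord.rot n (toD n a d) ≠ .central (a + (n : ZMod (2*n))) true := by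
  haveI : NeZero (2*n) := ⟨by omega⟩
  rcases diag_cases hd with ⟨u, hu1, hu2, rfl⟩ | rfl | ⟨u, v, huv, hvn, hu2, hune, rfl⟩
  · rw [toD_ct a hu1 hu2, rot_ct]
    constructor <;> intro h <;> rw [DChord.central.injEq] at h
    · have := (add_cast_eq_self a hn (u := u + n) (by omega)).mp h.1
      omega
    · have := (cast_eq_iff hn (u := u + n) (w := n) (by omega) (by omega)).mp
        (add_right_inj a |>.mp h.1)
      omega
  · rw [toD_cf' a, rot_ct]
    constructor <;> intro h <;> rw [DChord.central.injEq] at h <;> exact Bool.noConfusion h.2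
  · rw [toD_dg a huv hvn hune, rot_dg]
    constructor <;> exact fun h => nomatch h

lemma toD_valid (hn : 2 ≤ n) {d : Sym2 (ZMod (n + 2))} (hd : IsDiagonal (n + 2) d) :
    DChord.IsValid n (toD n a d) := by
  rcases diag_cases hd with ⟨u, hu1, hu2, rfl⟩ | rfl | ⟨u, v, huv, hvn, hu2, hune, rfl⟩
  · rw [toD_ct a hu1 hu2]; trivial
  · rw [toD_cf' a]; trivial
  · rw [toD_dg a huv hvn hune]
    exact valid_dg a hn huv hvn hu2 (by omega)
end xlemmas

section classify
variable {n : ℕ} (a : ZMod (2 * n))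

lemma val_sub_antisymm {m : ℕ} [NeZero m] {x y : ZMod m} (h : x ≠ y) :
    (y - x).val + (x - y).val = m := by
  have h1 := zval_sub y x
  have h2 := zval_sub x y
  have h3 : x.val ≠ y.val := fun hh => h (by rw [zval_eq_iff]; exact hh)
  have := x.val_lt; have := y.val_lt
  split_ifs at h1 h2 <;> omega

lemma rep [NeZero (2*n)] (x : ZMod (2*n)) :
    x = a + (((x - a).val : ℕ) : ZMod (2*n)) := by
  rw [zval_cast]; ring

set_option maxHeartbeats 2000000 in
lemma classify_diag (hn : 2 ≤ n) {x y : ZMod (2*n)} (hxy : x ≠ y) (h1 : y ≠ x + 1)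
    (hL : (y - x).val < n)
    (hc0 : ¬ DChord.Cross n (.diag s(x, y)) (.central a true))
    (hcn : ¬ DChord.Cross n (.diag s(x, y)) (.central (a + (n : ZMod (2*n))) true)) :
    ∃ d, IsDiagonal (n+2) d ∧
      (DChord.diag s(x, y) = toD n a d ∨ DChord.diag s(x, y) = DChord.rot n (toD n a d)) := by
  haveI : NeZero (2*n) := ⟨by omega⟩
  have hx : x = a + (((x - a).val : ℕ) : ZMod (2*n)) := rep a x
  have hy : y = a + (((y - a).val : ℕ) : ZMod (2*n)) := rep a y
  set u := (x - a).val with hu0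
  set v := (y - a).val with hv0
  set L := (y - x).val with hL0
  have hA := a.val_lt
  have hX := x.val_lt
  have hY := y.val_lt
  have hu : u = if a.val ≤ x.val then x.val - a.val else x.val + 2*n - a.val := zval_sub x a
  have hv : v = if a.val ≤ y.val then y.val - a.val else y.val + 2*n - a.val := zval_sub y a
  have hLe : L = if x.val ≤ y.val then y.val - x.val else y.val + 2*n - x.val := zval_sub y x
  have hLne0 : L ≠ 0 := by
    intro h
    apply hxy
    have hz : y - x = 0 := by
      have h6 := zval_cast (y - x)
      rw [← hL0, h] at h6
      simpa using h6.symm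
    have h5 : y = x + (y - x) := by ring
    rw [hz, add_zero] at h5
    exact h5.symm
  have hLne1 : L ≠ 1 := by
    intro h
    apply h1
    have h4 : y - x = (1 : ZMod (2*n)) := by
      have h6 := zval_cast (y - x)
      rw [← hL0, h] at h6
      simpa using h6.symm
    have h5 : y = x + (y - x) := by ring
    rw [h4] at h5
    exact h5
  have hL2 : 2 ≤ L := by omega
  have hc0' : ¬ diagCrossCentral n s(x, y) a := hc0
  have hcn' : ¬ diagCrossCentral n s(x, y) (a + (n : ZMod (2*n))) := hcn
  rw [diagCross_mk] at hc0' hcn'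
  have hArc : ¬ arcMem (2*n) x y a := fun h => hc0' (Or.inl ⟨hL, h⟩)
  have hArcN : ¬ arcMem (2*n) x y (a + (n : ZMod (2*n))) := fun h => hcn' (Or.inl ⟨hL, h⟩)
  have eAn : (a + (n : ZMod (2*n))).val =
      if (n:ℕ) = 2*n then a.val else if a.val + n < 2*n then a.val + n else a.val + n - 2*n :=
    val_aa a n (by omega)
  rw [arcMem_iff] at hArc hArcN
  rw [eAn] at hArcN
  have hcase : (v = u + L ∧ u + L ≤ n) ∨
      (n ≤ u ∧ u + L ≤ 2*n ∧ (v = u + L ∨ (v = 0 ∧ u + L = 2*n))) := by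
    split_ifs at hu hv hLe hArcN <;> omega
  rcases hcase with ⟨hveq, hsum⟩ | ⟨hun, hsum, hveq⟩
  · refine ⟨s((u : ZMod (n+2)), ((u + L : ℕ) : ZMod (n+2))),
      isDiag_mk (by omega) (by omega) (by omega), Or.inl ?_⟩
    rw [toD_dg a (by omega) (by omega) (by omega)]
    congr 1
    rw [Sym2.eq_iff]
    exact Or.inl ⟨hx, by rw [hy, hveq]⟩
  · refine ⟨s(((u - n : ℕ) : ZMod (n+2)), ((u - n + L : ℕ) : ZMod (n+2))),
      isDiag_mk (by omega) (by omega) (by omega), Or.inr ?_⟩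
    rw [toD_dg a (by omega) (by omega) (by omega), rot_dg,
      show u - n + n = u from by omega, show u - n + L + n = u + L from by omega]
    congr 1
    rw [Sym2.eq_iff]
    have hyeq : a + ((u + L : ℕ) : ZMod (2*n)) = y := by
      rcases hveq with hveq | ⟨hv1, hv2⟩
      · rw [hy, hveq]
      · rw [hy, hv1, hv2, ZMod.natCast_self]
        norm_num
    exact Or.inl ⟨hx, hyeq.symm⟩

lemma classify (hn : 2 ≤ n) {c : DChord n} (hval : DChord.IsValid n c)
    (hc0 : ¬ DChord.Cross n c (.central a true))
    (hcn : ¬ DChord.Cross n c (.central (a + (n : ZMod (2*n))) true)) :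
    c = .central a true ∨ c = .central (a + (n : ZMod (2*n))) true ∨
      ∃ d, IsDiagonal (n+2) d ∧ (c = toD n a d ∨ c = DChord.rot n (toD n a d)) := by
  haveI : NeZero (2*n) := ⟨by omega⟩
  cases c with
  | central x b =>
    have hx : x = a + (((x - a).val : ℕ) : ZMod (2*n)) := rep a x
    set t := (x - a).val with ht
    have htlt : t < 2*n := ZMod.val_lt _
    cases b with
    | true =>
      by_cases h0 : t = 0
      · left; rw [hx, h0]; norm_num
      by_cases hn0 : t = n
      · right; left; rw [hx, hn0]
      rcases Nat.lt_or_ge t n with hlt | hge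
      · exact Or.inr (Or.inr ⟨s((t : ZMod (n+2)), ((n+1 : ℕ) : ZMod (n+2))),
          isDiag_mk (by omega) (by omega) (by omega),
          Or.inl (by rw [toD_ct a (by omega) (by omega), ← hx])⟩)
      · refine Or.inr (Or.inr ⟨s(((t - n : ℕ) : ZMod (n+2)), ((n+1 : ℕ) : ZMod (n+2))),
          isDiag_mk (by omega) (by omega) (by omega), Or.inr ?_⟩)
        rw [toD_ct a (by omega) (by omega), rot_ct, show t - n + n = t from by omega, ← hx]
    | false =>
      have h0 : a = x ∨ a = x + (n : ZMod (2*n)) := by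
        by_contra hco
        push_neg at hco
        exact hc0 ⟨by simp, hco.1, hco.2⟩
      rcases h0 with h0 | h0
      · refine Or.inr (Or.inr ⟨s(((0:ℕ) : ZMod (n+2)), ((n:ℕ) : ZMod (n+2))),
          isDiag_mk (by omega) (by omega) (by omega), Or.inl ?_⟩)
        rw [toD_cf' a, ← h0]
        norm_num
      · refine Or.inr (Or.inr ⟨s(((0:ℕ) : ZMod (n+2)), ((n:ℕ) : ZMod (n+2))),
          isDiag_mk (by omega) (by omega) (by omega), Or.inr ?_⟩)
        have hx2 : x = a + (n : ZMod (2*n)) := by rw [h0, add_nn]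
        rw [toD_cf' a, rot_ct, hx2]
        norm_num
  | diag e =>
    obtain ⟨x, y, rfl, hxy, h1, h2, h3⟩ := hval
    right; right
    have hsum := val_sub_antisymm (x := x) (y := y) hxy
    have hyn : (y - x).val ≠ n := by
      intro h
      apply h3
      have h4 : y - x = (n : ZMod (2*n)) := by rw [← zval_cast (y - x), h]
      have h5 : y = x + (y - x) := by ring
      rw [h4] at h5
      exact h5
    rcases Nat.lt_or_ge (y - x).val n with hL | hL
    · exact classify_diag a hn hxy h1 hL hc0 hcn
    · have hL' : (x - y).val < n := by omega
      have hswap : s(y, x) = s(x, y) := Sym2.eq_swap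
      have hc0' : ¬ DChord.Cross n (.diag s(y, x)) (.central a true) := by
        rw [hswap]; exact hc0
      have hcn' : ¬ DChord.Cross n (.diag s(y, x)) (.central (a + (n : ZMod (2*n))) true) := by
        rw [hswap]; exact hcn
      obtain ⟨d, hd1, hd2⟩ := classify_diag a hn (Ne.symm hxy) h2 hL' hc0' hcn'
      rw [hswap] at hd2
      exact ⟨d, hd1, hd2⟩
end classify

section maps
open Classical in
noncomputable def PhiS (n : ℕ) (a : ZMod (2*n)) (S : Finset (Sym2 (ZMod (n+2)))) :
    Finset (DChord n) :=
  {DChord.central a true, DChord.central (a + (n : ZMod (2*n))) true} ∪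
    S.image (toD n a) ∪ S.image (fun d => DChord.rot n (toD n a d))

open Classical in
noncomputable def PsiT (n : ℕ) (a : ZMod (2*n)) (T : Finset (DChord n)) :
    Finset (Sym2 (ZMod (n+2))) :=
  Finset.univ.filter (fun d => IsDiagonal (n+2) d ∧ toD n a d ∈ T)

variable {n : ℕ} (a : ZMod (2 * n))

lemma mem_PhiS {S : Finset (Sym2 (ZMod (n+2)))} {c : DChord n} :
    c ∈ PhiS n a S ↔ (c = .central a true ∨ c = .central (a + (n : ZMod (2*n))) true ∨
      (∃ d ∈ S, c = toD n a d) ∨ (∃ d ∈ S, c = DChord.rot n (toD n a d))) := by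
  classical
  simp only [PhiS, Finset.mem_union, Finset.mem_insert, Finset.mem_singleton,
    Finset.mem_image]
  constructor
  · rintro (((h | h) | ⟨d, hd, h⟩) | ⟨d, hd, h⟩)
    · exact Or.inl h
    · exact Or.inr (Or.inl h)
    · exact Or.inr (Or.inr (Or.inl ⟨d, hd, h.symm⟩))
    · exact Or.inr (Or.inr (Or.inr ⟨d, hd, h.symm⟩))
  · rintro (h | h | ⟨d, hd, h⟩ | ⟨d, hd, h⟩)
    · exact Or.inl (Or.inl (Or.inl h))
    · exact Or.inl (Or.inl (Or.inr h))
    · exact Or.inl (Or.inr ⟨d, hd, h.symm⟩)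
    · exact Or.inr ⟨d, hd, h.symm⟩

lemma mem_PsiT {T : Finset (DChord n)} {d : Sym2 (ZMod (n+2))} :
    d ∈ PsiT n a T ↔ IsDiagonal (n+2) d ∧ toD n a d ∈ T := by
  classical
  simp [PsiT]

lemma X3_0 (hn : 2 ≤ n) {d : Sym2 (ZMod (n+2))} (hd : IsDiagonal (n+2) d) :
    ¬ DChord.Cross n (toD n a d) (.central a true) := by
  have h := X3 a hn hd (t := 0) (Or.inl rfl)
  simpa using h

lemma X3_n (hn : 2 ≤ n) {d : Sym2 (ZMod (n+2))} (hd : IsDiagonal (n+2) d) :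
    ¬ DChord.Cross n (toD n a d) (.central (a + (n : ZMod (2*n))) true) :=
  X3 a hn hd (Or.inr rfl)

lemma ct0_eq_rot_ctn :
    (DChord.central a true : DChord n) =
      DChord.rot n (.central (a + (n : ZMod (2*n))) true) := by
  show _ = DChord.central (a + (n : ZMod (2*n)) + (n : ZMod (2*n))) true
  rw [add_nn]

lemma X3_rot_0 (hn : 2 ≤ n) {d : Sym2 (ZMod (n+2))} (hd : IsDiagonal (n+2) d) :
    ¬ DChord.Cross n (DChord.rot n (toD n a d)) (.central a true) := by
  haveI : NeZero (2*n) := ⟨by omega⟩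
  rw [ct0_eq_rot_ctn a, cross_rot]
  exact X3_n a hn hd

lemma X3_rot_n (hn : 2 ≤ n) {d : Sym2 (ZMod (n+2))} (hd : IsDiagonal (n+2) d) :
    ¬ DChord.Cross n (DChord.rot n (toD n a d)) (.central (a + (n : ZMod (2*n))) true) := by
  haveI : NeZero (2*n) := ⟨by omega⟩
  rw [show (DChord.central (a + (n : ZMod (2*n))) true : DChord n) =
    DChord.rot n (.central a true) from rfl, cross_rot]
  exact X3_0 a hn hd

lemma no_cross_tt (c d : ZMod (2*n)) : ¬ DChord.Cross n (.central c true) (.central d true) :=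
  fun h => h.1 rfl

lemma toD_mem_PhiS (hn : 2 ≤ n) {S : Finset (Sym2 (ZMod (n+2)))}
    (hS : ∀ e ∈ S, IsDiagonal (n+2) e) {d : Sym2 (ZMod (n+2))} (hd : IsDiagonal (n+2) d) :
    toD n a d ∈ PhiS n a S ↔ d ∈ S := by
  rw [mem_PhiS]
  constructor
  · rintro (h | h | ⟨d', hd', h⟩ | ⟨d', hd', h⟩)
    · exact absurd h (I1 a hn hd).1
    · exact absurd h (I1 a hn hd).2
    · rw [I2 a hn hd (hS d' hd') h]; exact hd'
    · exact absurd h (I3 a hn hd (hS d' hd'))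
  · intro h
    exact Or.inr (Or.inr (Or.inl ⟨d, h, rfl⟩))

lemma rot_toD_mem_PhiS (hn : 2 ≤ n) {S : Finset (Sym2 (ZMod (n+2)))}
    (hS : ∀ e ∈ S, IsDiagonal (n+2) e) {d : Sym2 (ZMod (n+2))} (hd : IsDiagonal (n+2) d) :
    DChord.rot n (toD n a d) ∈ PhiS n a S ↔ d ∈ S := by
  haveI : NeZero (2*n) := ⟨by omega⟩
  rw [mem_PhiS]
  constructor
  · rintro (h | h | ⟨d', hd', h⟩ | ⟨d', hd', h⟩)
    · exact absurd h (I4 a hn hd).1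
    · exact absurd h (I4 a hn hd).2
    · exact absurd h.symm (I3 a hn (hS d' hd') hd)
    · have h2 := congrArg (DChord.rot n) h
      rw [rot_rot, rot_rot] at h2
      rw [I2 a hn hd (hS d' hd') h2]
      exact hd'
  · intro h
    exact Or.inr (Or.inr (Or.inr ⟨d, h, rfl⟩))

lemma ct0_mem_PhiS {S : Finset (Sym2 (ZMod (n+2)))} :
    (DChord.central a true : DChord n) ∈ PhiS n a S :=
  (mem_PhiS a).mpr (Or.inl rfl)

lemma ctn_mem_PhiS {S : Finset (Sym2 (ZMod (n+2)))} :
    (DChord.central (a + (n : ZMod (2*n))) true : DChord n) ∈ PhiS n a S :=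
  (mem_PhiS a).mpr (Or.inr (Or.inl rfl))

lemma PsiT_triangulation (hn : 2 ≤ n) {T : Finset (DChord n)} (hT : DCSTriangulation n T)
    (h0 : (DChord.central a true : DChord n) ∈ T)
    (hn0 : (DChord.central (a + (n : ZMod (2*n))) true : DChord n) ∈ T) :
    IsTriangulation (n+2) (PsiT n a T) := by
  refine ⟨fun e he => ((mem_PsiT a).mp he).1, ?_, ?_⟩
  · intro e he f hf hcr
    obtain ⟨hde, hme⟩ := (mem_PsiT a).mp he
    obtain ⟨hdf, hmf⟩ := (mem_PsiT a).mp hf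
    exact hT.1.2.1 _ hme _ hmf ((X1 a hn hde hdf).mpr hcr)
  · intro d hd hdm
    have hnotin : toD n a d ∉ T := fun h => hdm ((mem_PsiT a).mpr ⟨hd, h⟩)
    obtain ⟨f, hf, hcross⟩ := hT.1.2.2 (toD n a d) (toD_valid a hn hd) hnotin
    have hf0 : ¬ DChord.Cross n f (.central a true) := hT.1.2.1 f hf _ h0
    have hfn : ¬ DChord.Cross n f (.central (a + (n : ZMod (2*n))) true) := hT.1.2.1 f hf _ hn0
    rcases classify a hn (hT.1.1 f hf) hf0 hfn with hfe | hfe | ⟨d', hd', hfe | hfe⟩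
    · rw [hfe] at hcross
      exact absurd hcross (X3_0 a hn hd)
    · rw [hfe] at hcross
      exact absurd hcross (X3_n a hn hd)
    · rw [hfe] at hcross hf
      exact ⟨d', (mem_PsiT a).mpr ⟨hd', hf⟩, (X1 a hn hd hd').mp hcross⟩
    · rw [hfe] at hcross hf
      have hmem : toD n a d' ∈ T := by
        have h2 := hT.2 _ hf
        rwa [rot_rot] at h2
      exact ⟨d', (mem_PsiT a).mpr ⟨hd', hmem⟩, X2 a hn hd hd' hcross⟩

lemma PhiS_DCS (hn : 2 ≤ n) {S : Finset (Sym2 (ZMod (n+2)))} (hS : IsTriangulation (n+2) S) :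
    DCSTriangulation n (PhiS n a S) := by
  haveI : NeZero (2*n) := ⟨by omega⟩
  have hSd : ∀ e ∈ S, IsDiagonal (n+2) e := hS.1
  refine ⟨⟨?_, ?_, ?_⟩, ?_⟩
  · -- validity
    intro e he
    rcases (mem_PhiS a).mp he with rfl | rfl | ⟨d, hd, rfl⟩ | ⟨d, hd, rfl⟩
    · trivial
    · trivial
    · exact toD_valid a hn (hSd d hd)
    · exact valid_rot hn (toD_valid a hn (hSd d hd))
  · -- pairwise non-crossing
    intro e he f hf
    rcases (mem_PhiS a).mp he with rfl | rfl | ⟨d, hd, rfl⟩ | ⟨d, hd, rfl⟩ <;>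
      rcases (mem_PhiS a).mp hf with rfl | rfl | ⟨d', hd', rfl⟩ | ⟨d', hd', rfl⟩
    · exact no_cross_tt _ _
    · exact no_cross_tt _ _
    · exact fun h => X3_0 a hn (hSd d' hd') ((dcross_comm ..).mp h)
    · exact fun h => X3_rot_0 a hn (hSd d' hd') ((dcross_comm ..).mp h)
    · exact no_cross_tt _ _
    · exact no_cross_tt _ _
    · exact fun h => X3_n a hn (hSd d' hd') ((dcross_comm ..).mp h)
    · exact fun h => X3_rot_n a hn (hSd d' hd') ((dcross_comm ..).mp h)
    · exact X3_0 a hn (hSd d hd)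
    · exact X3_n a hn (hSd d hd)
    · exact fun h => hS.2.1 d hd d' hd' ((X1 a hn (hSd d hd) (hSd d' hd')).mp h)
    · exact fun h => hS.2.1 d hd d' hd' (X2 a hn (hSd d hd) (hSd d' hd') h)
    · exact X3_rot_0 a hn (hSd d hd)
    · exact X3_rot_n a hn (hSd d hd)
    · intro h
      have h2 := X2 a hn (hSd d' hd') (hSd d hd) ((dcross_comm ..).mp h)
      exact hS.2.1 d hd d' hd' ((crosses_comm ..).mp h2)
    · intro h
      rw [cross_rot] at h
      exact hS.2.1 d hd d' hd' ((X1 a hn (hSd d hd) (hSd d' hd')).mp h)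
  · -- maximality
    intro c hcval hcnot
    by_cases h0 : DChord.Cross n c (.central a true)
    · exact ⟨_, ct0_mem_PhiS a, h0⟩
    by_cases hn' : DChord.Cross n c (.central (a + (n : ZMod (2*n))) true)
    · exact ⟨_, ctn_mem_PhiS a, hn'⟩
    rcases classify a hn hcval h0 hn' with rfl | rfl | ⟨d, hd, rfl | rfl⟩
    · exact absurd (ct0_mem_PhiS a) hcnot
    · exact absurd (ctn_mem_PhiS a) hcnot
    · have hdS : d ∉ S := fun h => hcnot ((toD_mem_PhiS a hn hSd hd).mpr h)
      obtain ⟨d', hd', hcr⟩ := hS.2.2 d hd hdS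
      exact ⟨toD n a d', (toD_mem_PhiS a hn hSd (hSd d' hd')).mpr hd',
        (X1 a hn hd (hSd d' hd')).mpr hcr⟩
    · have hdS : d ∉ S := fun h => hcnot ((rot_toD_mem_PhiS a hn hSd hd).mpr h)
      obtain ⟨d', hd', hcr⟩ := hS.2.2 d hd hdS
      refine ⟨DChord.rot n (toD n a d'), (rot_toD_mem_PhiS a hn hSd (hSd d' hd')).mpr hd', ?_⟩
      rw [cross_rot]
      exact (X1 a hn hd (hSd d' hd')).mpr hcr
  · -- central symmetry
    intro e he
    rcases (mem_PhiS a).mp he with rfl | rfl | ⟨d, hd, rfl⟩ | ⟨d, hd, rfl⟩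
    · exact (mem_PhiS a).mpr (Or.inr (Or.inl rfl))
    · refine (mem_PhiS a).mpr (Or.inl ?_)
      exact (ct0_eq_rot_ctn a).symm
    · exact (mem_PhiS a).mpr (Or.inr (Or.inr (Or.inr ⟨d, hd, rfl⟩)))
    · rw [rot_rot]
      exact (mem_PhiS a).mpr (Or.inr (Or.inr (Or.inl ⟨d, hd, rfl⟩)))

lemma PhiS_PsiT (hn : 2 ≤ n) {T : Finset (DChord n)} (hT : DCSTriangulation n T)
    (h0 : (DChord.central a true : DChord n) ∈ T)
    (hn0 : (DChord.central (a + (n : ZMod (2*n))) true : DChord n) ∈ T) :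
    PhiS n a (PsiT n a T) = T := by
  haveI : NeZero (2*n) := ⟨by omega⟩
  ext c
  rw [mem_PhiS]
  constructor
  · rintro (rfl | rfl | ⟨d, hd, rfl⟩ | ⟨d, hd, rfl⟩)
    · exact h0
    · exact hn0
    · exact ((mem_PsiT a).mp hd).2
    · exact hT.2 _ ((mem_PsiT a).mp hd).2
  · intro hc
    have h1 : ¬ DChord.Cross n c (.central a true) := hT.1.2.1 c hc _ h0
    have h2 : ¬ DChord.Cross n c (.central (a + (n : ZMod (2*n))) true) := hT.1.2.1 c hc _ hn0
    rcases classify a hn (hT.1.1 c hc) h1 h2 with rfl | rfl | ⟨d, hd, rfl | rfl⟩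
    · exact Or.inl rfl
    · exact Or.inr (Or.inl rfl)
    · exact Or.inr (Or.inr (Or.inl ⟨d, (mem_PsiT a).mpr ⟨hd, hc⟩, rfl⟩))
    · refine Or.inr (Or.inr (Or.inr ⟨d, (mem_PsiT a).mpr ⟨hd, ?_⟩, rfl⟩))
      have h3 := hT.2 _ hc
      rwa [rot_rot] at h3

lemma PsiT_PhiS (hn : 2 ≤ n) {S : Finset (Sym2 (ZMod (n+2)))}
    (hS : ∀ e ∈ S, IsDiagonal (n+2) e) : PsiT n a (PhiS n a S) = S := by
  ext d
  rw [mem_PsiT]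
  constructor
  · rintro ⟨hd, hmem⟩
    exact (toD_mem_PhiS a hn hS hd).mp hmem
  · intro hd
    exact ⟨hS d hd, (toD_mem_PhiS a hn hS (hS d hd)).mpr hd⟩
end maps

section final
variable {n : ℕ} (a : ZMod (2 * n))

lemma sdiff_PhiS_card (hn : 2 ≤ n) {S S' : Finset (Sym2 (ZMod (n+2)))}
    (hS : ∀ e ∈ S, IsDiagonal (n+2) e) (hS' : ∀ e ∈ S', IsDiagonal (n+2) e) :
    (PhiS n a S \ PhiS n a S').card = 2 * (S \ S').card := by
  classical
  haveI : NeZero (2*n) := ⟨by omega⟩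
  have hset : PhiS n a S \ PhiS n a S' =
      (S \ S').image (toD n a) ∪ (S \ S').image (fun d => DChord.rot n (toD n a d)) := by
    ext c
    simp only [Finset.mem_sdiff, Finset.mem_union, Finset.mem_image]
    constructor
    · rintro ⟨hc, hnc⟩
      rcases (mem_PhiS a).mp hc with rfl | rfl | ⟨d, hd, rfl⟩ | ⟨d, hd, rfl⟩
      · exact absurd (ct0_mem_PhiS a) hnc
      · exact absurd (ctn_mem_PhiS a) hnc
      · exact Or.inl ⟨d, ⟨hd, fun h => hnc ((toD_mem_PhiS a hn hS' (hS d hd)).mpr h)⟩, rfl⟩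
      · exact Or.inr ⟨d, ⟨hd, fun h => hnc ((rot_toD_mem_PhiS a hn hS' (hS d hd)).mpr h)⟩, rfl⟩
    · rintro (⟨d, hd, rfl⟩ | ⟨d, hd, rfl⟩)
      · exact ⟨(toD_mem_PhiS a hn hS (hS d hd.1)).mpr hd.1,
          fun h => hd.2 ((toD_mem_PhiS a hn hS' (hS d hd.1)).mp h)⟩
      · exact ⟨(rot_toD_mem_PhiS a hn hS (hS d hd.1)).mpr hd.1,
          fun h => hd.2 ((rot_toD_mem_PhiS a hn hS' (hS d hd.1)).mp h)⟩
  have hmem : ∀ d ∈ S \ S', IsDiagonal (n+2) d := fun d hd => hS d (Finset.mem_sdiff.mp hd).1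
  have hdisj : Disjoint ((S \ S').image (toD n a))
      ((S \ S').image (fun d => DChord.rot n (toD n a d))) := by
    rw [Finset.disjoint_left]
    rintro c h1 h2
    obtain ⟨d, hd, rfl⟩ := Finset.mem_image.mp h1
    obtain ⟨d', hd', heq⟩ := Finset.mem_image.mp h2
    exact I3 a hn (hmem d hd) (hmem d' hd') heq.symm
  rw [hset, Finset.card_union_of_disjoint hdisj,
    Finset.card_image_of_injOn (fun d hd d' hd' h => I2 a hn (hmem d hd) (hmem d' hd') h),
    Finset.card_image_of_injOn (fun d hd d' hd' h => by
      have h2 := congrArg (DChord.rot n) h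
      rw [rot_rot, rot_rot] at h2
      exact I2 a hn (hmem d hd) (hmem d' hd') h2)]
  ring
lemma adj_iff (hn : 2 ≤ n) (T T' : {T : Finset (DChord n) // DCSTriangulation n T})
    (hT0 : DChord.central a true ∈ T.val)
    (hTn : DChord.central (a + (n : ZMod (2*n))) true ∈ T.val)
    (hT0' : DChord.central a true ∈ T'.val)
    (hTn' : DChord.central (a + (n : ZMod (2*n))) true ∈ T'.val)
    (P : IsTriangulation (n+2) (PsiT n a T.val))
    (P' : IsTriangulation (n+2) (PsiT n a T'.val)) :
    (assocGraphA (n+2)).Adj ⟨PsiT n a T.val, P⟩ ⟨PsiT n a T'.val, P'⟩ ↔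
      (typeDGraph n).Adj T T' := by
  haveI : NeZero (2 * n) := ⟨by omega⟩
  have e1 : PhiS n a (PsiT n a T.val) = T.val := PhiS_PsiT a hn T.2 hT0 hTn
  have e1' : PhiS n a (PsiT n a T'.val) = T'.val := PhiS_PsiT a hn T'.2 hT0' hTn'
  have hps : ∀ e ∈ PsiT n a T.val, IsDiagonal (n+2) e := fun e he => ((mem_PsiT a).mp he).1
  have hps' : ∀ e ∈ PsiT n a T'.val, IsDiagonal (n+2) e := fun e he => ((mem_PsiT a).mp he).1
  have key1 := sdiff_PhiS_card a hn hps hps'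
  rw [e1, e1'] at key1
  have key2 := sdiff_PhiS_card a hn hps' hps
  rw [e1, e1'] at key2
  constructor
  · rintro ⟨h1, h2, h3⟩
    have h2' : (PsiT n a T.val \ PsiT n a T'.val).card ≤ 1 := h2
    have h3' : (PsiT n a T'.val \ PsiT n a T.val).card ≤ 1 := h3
    refine ⟨?_, by omega, by omega⟩
    intro hTT
    exact h1 (Subtype.ext (congrArg (PsiT n a) (congrArg Subtype.val hTT)))
  · rintro ⟨h1, h2, h3⟩
    have h2' : (T.val \ T'.val).card ≤ 2 := h2
    have h3' : (T'.val \ T.val).card ≤ 2 := h3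
    refine ⟨?_, ?_, ?_⟩
    · intro hSS
      apply h1
      apply Subtype.ext
      have h4 : PsiT n a T.val = PsiT n a T'.val := congrArg Subtype.val hSS
      rw [← e1, ← e1']
      exact congrArg (PhiS n a) h4
    · show (PsiT n a T.val \ PsiT n a T'.val).card ≤ 1
      omega
    · show (PsiT n a T'.val \ PsiT n a T.val).card ≤ 1
      omega
end final

/-- For `n ≥ 2` and a pair `r = {a, a + n}` of opposite vertices of the punctured `2n`-gon, the
class `Ψ(↻ r)` of centrally symmetric triangulations containing the clockwise central chord
pair at `r` induces a subgraph of the type-D associahedron isomorphic to the type-A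
associahedron graph `\U0001d51e_{n-1}`, whose vertices are triangulations of an `(n+2)`-gon. -/
theorem typeD_class_iso_assocA (n : ℕ) (hn : 2 ≤ n) (a : ZMod (2 * n)) :
    Nonempty (((typeDGraph n).induce
        {T | DChord.central a true ∈ T.val ∧
             DChord.central (a + (n : ZMod (2 * n))) true ∈ T.val}) ≃g
      assocGraphA (n + 2)) := by
  haveI : NeZero (2 * n) := ⟨by omega⟩
  constructor
  refine ⟨⟨fun T => ⟨PsiT n a T.1.1, PsiT_triangulation a hn T.1.2 T.2.1 T.2.2⟩,
    fun S => ⟨⟨PhiS n a S.1, PhiS_DCS a hn S.2⟩, ct0_mem_PhiS a, ctn_mem_PhiS a⟩,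
    ?_, ?_⟩, ?_⟩
  · intro T
    apply Subtype.ext
    apply Subtype.ext
    exact PhiS_PsiT a hn T.1.2 T.2.1 T.2.2
  · intro S
    apply Subtype.ext
    exact PsiT_PhiS a hn S.2.1
  · intro T T'
    exact adj_iff a hn T.1 T'.1 T.2.1 T.2.2 T'.2.1 T'.2.2 _ _
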